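/- Let 1 < α < 2, h > 0, t ∈ ℝ, and let f : ℝ → ℝ be a bounded measurable function. Let Y₁⁺, Y₂⁺, … be independent, identically distributed random variables taking values in {2,3,4,…} with P(Y_n⁺ = k) = (1/(α-1)) · (-1)^k binom(α,k) for k ≥ 2 (these are positive and sum to 1). Then, with probability one, (1/h^α)·[f(t) - α f(t-h) + (α-1)·(1/N) Σ_{n=1}^{N} f(t - Y_n⁺ h)] converges, as N → ∞, to A_h^α f(t) := (1/h^α) Σ_{k=0}^∞ (-1)^k binom(α,k) f(t-kh). -/

import Mathlib

open Real Filter MeasureTheory ProbabilityTheory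

/-- Generalized binomial coefficient `binom(a, k) = a(a-1)⋯(a-k+1)/k!`. -/
noncomputable def genBinom (a : ℝ) (k : ℕ) : ℝ :=
  (∏ j ∈ Finset.range k, (a - (j : ℝ))) / (Nat.factorial k : ℝ)

lemma genBinom_succ (a : ℝ) (k : ℕ) :
    genBinom a (k + 1) = genBinom a k * (a - k) / (k + 1) := by
  unfold genBinom
  have hfac : ((k + 1).factorial : ℝ) = ((k : ℝ) + 1) * (k.factorial : ℝ) := by
    rw [Nat.factorial_succ]; push_cast; ring
  rw [Finset.prod_range_succ, hfac, div_mul_eq_mul_div, div_div, mul_comm ((k : ℝ) + 1) _]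

lemma genBinom_zero (a : ℝ) : genBinom a 0 = 1 := by simp [genBinom]

lemma genBinom_one (a : ℝ) : genBinom a 1 = a := by simp [genBinom]

lemma w_nonneg {α : ℝ} (hα1 : 1 < α) (hα2 : α < 2) :
    ∀ k, 2 ≤ k → 0 ≤ (-1 : ℝ) ^ k * genBinom α k := by
  intro k hk
  induction k, hk using Nat.le_induction with
  | base =>
    have : genBinom α 2 = α * (α - 1) / 2 := by
      rw [show (2:ℕ) = 1 + 1 from rfl, genBinom_succ, genBinom_one]
      norm_num
    rw [this]
    have h0 : (0:ℝ) < α := by linarith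
    have h1 : (0:ℝ) ≤ α - 1 := by linarith
    positivity
  | succ n hn ih =>
    rw [genBinom_succ]
    have hrw : (-1 : ℝ) ^ (n + 1) * (genBinom α n * (α - n) / (n + 1)) =
        ((-1 : ℝ) ^ n * genBinom α n) * (((n : ℝ) - α) / (n + 1)) := by
      rw [pow_succ]; ring
    rw [hrw]
    have h1 : (0:ℝ) ≤ (n : ℝ) - α := by
      have : (2:ℝ) ≤ (n : ℝ) := by exact_mod_cast hn
      linarith
    have h2 : (0:ℝ) < (n : ℝ) + 1 := by positivity
    exact mul_nonneg ih (div_nonneg h1 h2.le)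

/-- Monte Carlo evaluation of the Grünwald–Letnikov fractional derivative of order
`1 < α < 2`: if `Y₁⁺, Y₂⁺, …` are i.i.d. with the sieved Sibuya-like distribution
`P(Y⁺ = k) = (1/(α-1)) (-1)^k binom(α,k)` on `{2,3,…}`, then almost surely
`(1/h^α)[f(t) - α f(t-h) + (α-1)(1/N) Σ_{n<N} f(t - Yₙ⁺ h)] → A_h^α f(t)`. -/
theorem monte_carlo_gl_derivative_one_lt_alpha_lt_two
    (α : ℝ) (hα1 : 1 < α) (hα2 : α < 2) (h : ℝ) (hh : 0 < h) (t : ℝ)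
    (f : ℝ → ℝ) (hf_meas : Measurable f) (hf_bdd : ∃ M : ℝ, ∀ x, |f x| ≤ M)
    {Ω : Type*} [MeasurableSpace Ω] (P : Measure Ω) [IsProbabilityMeasure P]
    (Y : ℕ → Ω → ℕ) (hY_meas : ∀ n, Measurable (Y n))
    (hY_indep : iIndepFun Y P)
    (hY_ge : ∀ n ω, 2 ≤ Y n ω)
    (hY_distrib : ∀ n k, 2 ≤ k →
      P {ω | Y n ω = k} =
        ENNReal.ofReal ((1 / (α - 1)) * ((-1 : ℝ) ^ k * genBinom α k))) :
    ∀ᵐ ω ∂P, Tendsto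
      (fun N : ℕ => (1 / h ^ α) *
        (f t - α * f (t - h) +
          (α - 1) * ((1 / (N : ℝ)) * ∑ n ∈ Finset.range N, f (t - (Y n ω : ℝ) * h))))
      atTop
      (nhds ((1 / h ^ α) *
        ∑' k : ℕ, (-1 : ℝ) ^ k * genBinom α k * f (t - (k : ℝ) * h))) := by
  obtain ⟨M, hM⟩ := hf_bdd
  have hM0 : 0 ≤ M := le_trans (abs_nonneg _) (hM 0)
  have hα1' : (0:ℝ) < α - 1 := by linarith
  set w : ℕ → ℝ := fun k => (-1 : ℝ) ^ k * genBinom α k with hw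
  set g : ℕ → ℝ := fun k => f (t - (k : ℝ) * h) with hg
  set X : ℕ → Ω → ℝ := fun n ω => g (Y n ω) with hX
  have hg_meas : Measurable g := measurable_from_top
  -- all Y n have the same law
  set μ : Measure ℕ := Measure.map (Y 0) P with hμ
  have hmapsing : ∀ n k, Measure.map (Y n) P {k} = P {ω | Y n ω = k} := by
    intro n k
    rw [Measure.map_apply (hY_meas n) (measurableSet_singleton k)]
    rfl
  have hmap : ∀ n, Measure.map (Y n) P = μ := by
    intro n
    apply MeasureTheory.Measure.ext_of_singleton
    intro k
    rw [hmapsing, hμ, hmapsing]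
    rcases le_or_gt 2 k with hk | hk
    · rw [hY_distrib n k hk, hY_distrib 0 k hk]
    · have e1 : {ω | Y n ω = k} = ∅ := by
        ext ω; simp only [Set.mem_setOf_eq, Set.mem_empty_iff_false, iff_false]
        intro hc; have := hY_ge n ω; omega
      have e2 : {ω | Y 0 ω = k} = ∅ := by
        ext ω; simp only [Set.mem_setOf_eq, Set.mem_empty_iff_false, iff_false]
        intro hc; have := hY_ge 0 ω; omega
      rw [e1, e2]
  have hμprob : IsProbabilityMeasure μ :=
    Measure.isProbabilityMeasure_map (hY_meas 0).aemeasurable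
  -- singleton masses
  have hqlow : ∀ k, k < 2 → μ {k} = 0 := by
    intro k hk
    rw [hμ, hmapsing]
    have : {ω | Y 0 ω = k} = ∅ := by
      ext ω; simp only [Set.mem_setOf_eq, Set.mem_empty_iff_false, iff_false]
      intro hc; have := hY_ge 0 ω; omega
    simp [this]
  have hqhigh : ∀ k, 2 ≤ k → μ {k} = ENNReal.ofReal ((1 / (α - 1)) * w k) := by
    intro k hk
    rw [hμ, hmapsing]; exact hY_distrib 0 k hk
  -- total mass finite, summability
  have htot : ∑' k : ℕ, μ {k} = 1 := by
    have : ∑' k : ℕ, μ {k} = μ Set.univ := by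
      rw [← Set.iUnion_of_singleton ℕ,
        measure_iUnion (fun i j hij => by simpa [Set.disjoint_singleton] using hij)
          (fun k => measurableSet_singleton k)]
    rw [this, measure_univ]
  set r : ℕ → ℝ := fun k => (μ {k}).toReal with hr
  have hr_nonneg : ∀ k, 0 ≤ r k := fun k => ENNReal.toReal_nonneg
  have hr_summable : Summable r := ENNReal.summable_toReal (by rw [htot]; exact ENNReal.one_ne_top)
  have hrw_eq : ∀ k, 2 ≤ k → w k = (α - 1) * r k := by
    intro k hk
    have hwnn : 0 ≤ w k := w_nonneg hα1 hα2 k hk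
    have hrk : r k = (1 / (α - 1)) * w k := by
      rw [show r k = (μ {k}).toReal from rfl, hqhigh k hk,
        ENNReal.toReal_ofReal (by positivity)]
    rw [hrk]
    field_simp
  have hr0 : r 0 = 0 := by simp [hr, hqlow 0 (by norm_num)]
  have hr1 : r 1 = 0 := by simp [hr, hqlow 1 (by norm_num)]
  -- summability of r * g and w * g
  have hrg_summable : Summable (fun k => r k * g k) := by
    apply Summable.of_norm_bounded (hr_summable.mul_right M)
    intro k
    rw [norm_mul, Real.norm_of_nonneg (hr_nonneg k)]
    exact mul_le_mul_of_nonneg_left (by rw [Real.norm_eq_abs]; exact hM _) (hr_nonneg k)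
  have hwg_shift : (fun n : ℕ => w (n + 2) * g (n + 2)) =
      (fun n : ℕ => (α - 1) * (r (n + 2) * g (n + 2))) := by
    funext n
    rw [hrw_eq (n + 2) (by omega)]; ring
  have hwg_summable : Summable (fun k => w k * g k) := by
    rw [← summable_nat_add_iff 2, hwg_shift]
    exact ((summable_nat_add_iff 2).2 hrg_summable).mul_left _
  -- integrability
  have hg_int : Integrable g μ := by
    refine (integrable_const M).mono' hg_meas.aestronglyMeasurable ?_
    exact Filter.Eventually.of_forall fun k => by rw [Real.norm_eq_abs]; exact hM _
  have hX0_int : Integrable (X 0) P := by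
    rw [hX]
    have := (integrable_map_measure hg_meas.aestronglyMeasurable
      (hY_meas 0).aemeasurable).1 (by rwa [hmap 0])
    exact this
  -- expectation
  have hE : ∫ ω, X 0 ω ∂P = ∑' k, r k * g k := by
    have h1 : ∫ ω, X 0 ω ∂P = ∫ k, g k ∂μ := by
      rw [hμ, integral_map (hY_meas 0).aemeasurable hg_meas.aestronglyMeasurable]
    rw [h1, integral_countable' hg_int]
    exact tsum_congr fun k => by rw [smul_eq_mul]; rfl
  -- identify the tsum in the statement
  have hw0 : w 0 = 1 := by simp [hw, genBinom_zero]
  have hw1 : w 1 = -α := by simp [hw, genBinom_one]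
  have hg0 : g 0 = f t := by simp [hg]
  have hg1 : g 1 = f (t - h) := by simp [hg]
  have hsum1 : Summable (fun n : ℕ => w (n + 1) * g (n + 1)) :=
    (summable_nat_add_iff 1).2 hwg_summable
  have hrsum1 : Summable (fun n : ℕ => r (n + 1) * g (n + 1)) :=
    (summable_nat_add_iff 1).2 hrg_summable
  have hkey : ∑' k, w k * g k = f t - α * f (t - h) + (α - 1) * ∫ ω, X 0 ω ∂P := by
    rw [hE]
    rw [Summable.tsum_eq_zero_add hwg_summable, Summable.tsum_eq_zero_add hsum1]
    rw [Summable.tsum_eq_zero_add hrg_summable, Summable.tsum_eq_zero_add hrsum1]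
    simp only [hr0, hr1, zero_mul, zero_add]
    have : ∑' n : ℕ, w (n + 1 + 1) * g (n + 1 + 1) =
        (α - 1) * ∑' n : ℕ, r (n + 1 + 1) * g (n + 1 + 1) := by
      rw [← tsum_mul_left]
      exact tsum_congr fun n => by rw [hrw_eq (n + 1 + 1) (by omega)]; ring
    rw [this, hw0, hw1, hg0, hg1]
    ring
  -- independence and identical distribution of X
  have hX_indep : Pairwise (Function.onFun (IndepFun · · P) X) := by
    intro i j hij
    exact (hY_indep.indepFun hij).comp hg_meas hg_meas
  have hX_ident : ∀ i, IdentDistrib (X i) (X 0) P P := by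
    intro i
    have hYid : IdentDistrib (Y i) (Y 0) P P :=
      ⟨(hY_meas i).aemeasurable, (hY_meas 0).aemeasurable, by rw [hmap i, hmap 0]⟩
    exact hYid.comp hg_meas
  -- strong law
  have hSLLN := strong_law_ae_real X hX0_int hX_indep hX_ident
  filter_upwards [hSLLN] with ω hω
  have hT : Tendsto
      (fun N : ℕ => (1 / h ^ α) *
        (f t - α * f (t - h) +
          (α - 1) * ((∑ n ∈ Finset.range N, X n ω) / (N : ℝ))))
      atTop
      (nhds ((1 / h ^ α) *
        (f t - α * f (t - h) + (α - 1) * ∫ ω, X 0 ω ∂P))) := by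
    exact (((hω.const_mul (α - 1)).const_add (f t - α * f (t - h))).const_mul (1 / h ^ α))
  have heq : (fun N : ℕ => (1 / h ^ α) *
        (f t - α * f (t - h) +
          (α - 1) * ((∑ n ∈ Finset.range N, X n ω) / (N : ℝ)))) =
      (fun N : ℕ => (1 / h ^ α) *
        (f t - α * f (t - h) +
          (α - 1) * ((1 / (N : ℝ)) * ∑ n ∈ Finset.range N, f (t - (Y n ω : ℝ) * h)))) := by
    funext N
    have : (∑ n ∈ Finset.range N, X n ω) = ∑ n ∈ Finset.range N, f (t - (Y n ω : ℝ) * h) := by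
      exact Finset.sum_congr rfl fun n _ => rfl
    rw [this]
    ring
  rw [heq] at hT
  have hval : (1 / h ^ α) * (f t - α * f (t - h) + (α - 1) * ∫ ω, X 0 ω ∂P) =
      (1 / h ^ α) * ∑' k : ℕ, (-1 : ℝ) ^ k * genBinom α k * f (t - (k : ℝ) * h) := by
    rw [← hkey]
  rwa [hval] at hT
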